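/- Let μ be a Borel measure on (0,∞), c₀ ≥ 0, and K(r) = c₀ + ∫_{(0,∞)} e^{-xr} dμ(x). Suppose η ∈ [0, 1/2) satisfies ∫_{(0,∞)} (1+x)^{-η} dμ(x) < ∞. Then for every T > 0 there exists a constant C > 0 such that ∫_0^T (K(h + r) − K(r))² dr ≤ C h^{1−2η} for every h ∈ (0, T]. -/

import Mathlib

open Real MeasureTheory
open scoped ENNReal
open Set

lemma kia_sqrt_sq (X : ℝ≥0∞) : (X ^ (1/2 : ℝ)) ^ (2:ℕ) = X := by
  rw [← ENNReal.rpow_natCast (X ^ (1/2:ℝ)) 2, ← ENNReal.rpow_mul]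
  norm_num

lemma kia_exp_le {η : ℝ} (hη0 : 0 ≤ η) (hη1 : η ≤ 1) {r x : ℝ} (hr : 0 < r) (hx : 0 ≤ x) :
    Real.exp (-(x * r)) ≤ (min r 1)⁻¹ * (1 + x) ^ (-η) := by
  have hc : 0 < min r 1 := lt_min hr one_pos
  have h0x : (0:ℝ) < 1 + x := by linarith
  have hp : (0:ℝ) < (1 + x) ^ η := Real.rpow_pos_of_pos h0x _
  have h1 : (1 + x) ^ η ≤ 1 + x := by
    calc (1 + x) ^ η ≤ (1 + x) ^ (1:ℝ) :=
          Real.rpow_le_rpow_of_exponent_le (by linarith) hη1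
      _ = 1 + x := Real.rpow_one _
  have he : 1 + x * r ≤ Real.exp (x * r) := by
    have := Real.add_one_le_exp (x * r); linarith
  have hmr : min r 1 ≤ r := min_le_left _ _
  have hm1 : min r 1 ≤ 1 := min_le_right _ _
  have h2 : min r 1 * ((1 + x) ^ η) ≤ Real.exp (x * r) := by
    nlinarith [mul_le_mul_of_nonneg_left h1 hc.le, mul_nonneg hx (sub_nonneg.mpr hmr)]
  calc Real.exp (-(x*r)) = (Real.exp (x*r))⁻¹ := by rw [Real.exp_neg]
    _ ≤ (min r 1 * ((1+x) ^ η))⁻¹ := by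
        apply inv_anti₀ (by positivity) h2
    _ = (min r 1)⁻¹ * ((1+x) ^ η)⁻¹ := by rw [mul_inv]
    _ = (min r 1)⁻¹ * (1+x) ^ (-η) := by rw [← Real.rpow_neg h0x.le]

lemma kia_key {η T h x : ℝ} (hη0 : 0 ≤ η) (hη : η < 1/2) (hT : 0 < T)
    (hh : 0 < h) (hhT : h ≤ T) (hx : 0 < x) :
    (1+x) ^ η * (1 - Real.exp (-(x*h)))^2 * min T (1/(2*x)) ≤
      2*(T+1)^3 * h ^ (1-2*η) * (1+x) ^ (-η) := by
  have h0x : (0:ℝ) < 1 + x := by linarith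
  have hP : (0:ℝ) < (1+x) ^ η := Real.rpow_pos_of_pos h0x _
  have hH : (0:ℝ) < h ^ (1-2*η) := Real.rpow_pos_of_pos hh _
  have hu : 0 < x * h := mul_pos hx hh
  have hexp1 : Real.exp (-(x*h)) ≤ 1 := Real.exp_le_one_iff.mpr (by linarith)
  have hE0 : 0 ≤ 1 - Real.exp (-(x*h)) := by linarith
  have hEu : 1 - Real.exp (-(x*h)) ≤ x*h := by
    have := Real.add_one_le_exp (-(x*h)); linarith
  have hM0 : 0 < min T (1/(2*x)) := lt_min hT (by positivity)
  rw [Real.rpow_neg h0x.le, ← div_eq_mul_inv, le_div_iff₀ hP]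
  rcases le_or_gt x 1 with hx1 | hx1
  · have hP2 : (1+x) ^ η ≤ 2 := by
      calc (1+x) ^ η ≤ (2:ℝ) ^ η := Real.rpow_le_rpow h0x.le (by linarith) hη0
        _ ≤ (2:ℝ) ^ (1:ℝ) := Real.rpow_le_rpow_of_exponent_le one_le_two (by linarith)
        _ = 2 := Real.rpow_one 2
    have hE : (1 - Real.exp (-(x*h)))^2 ≤ h ^ (1-2*η) := by
      have hstep : (1 - Real.exp (-(x*h)))^2 ≤ (x*h) ^ (1-2*η) := by
        rcases le_or_gt (x*h) 1 with hu1 | hu1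
        · calc (1 - Real.exp (-(x*h)))^2 ≤ (x*h)^2 := by nlinarith
            _ = (x*h) ^ ((2:ℕ):ℝ) := (Real.rpow_natCast _ 2).symm
            _ ≤ (x*h) ^ (1-2*η) :=
                Real.rpow_le_rpow_of_exponent_ge hu hu1 (by push_cast; linarith)
        · calc (1 - Real.exp (-(x*h)))^2 ≤ 1 := by nlinarith [Real.exp_pos (-(x*h))]
            _ = (x*h) ^ (0:ℝ) := (Real.rpow_zero _).symm
            _ ≤ (x*h) ^ (1-2*η) :=
                Real.rpow_le_rpow_of_exponent_le hu1.le (by linarith)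
      calc (1 - Real.exp (-(x*h)))^2 ≤ (x*h) ^ (1-2*η) := hstep
        _ = x ^ (1-2*η) * h ^ (1-2*η) := Real.mul_rpow hx.le hh.le
        _ ≤ 1 * h ^ (1-2*η) := by
            gcongr
            exact Real.rpow_le_one hx.le hx1 (by linarith)
        _ = h ^ (1-2*η) := one_mul _
    have hMT : min T (1/(2*x)) ≤ T := min_le_left _ _
    have key1 : (1+x) ^ η * (1 - Real.exp (-(x*h)))^2 * min T (1/(2*x)) * (1+x) ^ η
        ≤ 2 * h ^ (1-2*η) * T * 2 := by
      have := mul_le_mul (mul_le_mul (mul_le_mul hP2 hE (by positivity) (by norm_num))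
        hMT hM0.le (by positivity)) hP2 hP.le (by positivity)
      linarith
    refine key1.trans ?_
    have hT1 : 4*T ≤ 2*(T+1)^3 := by nlinarith [pow_nonneg hT.le 3, sq_nonneg T, hT.le]
    linarith [mul_le_mul_of_nonneg_left hT1 hH.le]
  · have hxp : (0:ℝ) < x ^ η := Real.rpow_pos_of_pos hx _
    have hP2 : (1+x) ^ η ≤ 2 * x ^ η := by
      calc (1+x) ^ η ≤ (2*x) ^ η := Real.rpow_le_rpow h0x.le (by linarith) hη0
        _ = 2 ^ η * x ^ η := Real.mul_rpow (by norm_num) hx.le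
        _ ≤ 2 ^ (1:ℝ) * x ^ η :=
            mul_le_mul_of_nonneg_right
              (Real.rpow_le_rpow_of_exponent_le one_le_two (by linarith)) hxp.le
        _ = 2 * x ^ η := by rw [Real.rpow_one]
    have hMx : min T (1/(2*x)) ≤ 1/(2*x) := min_le_right _ _
    have hclaim : x ^ η * x ^ η * (1 - Real.exp (-(x*h)))^2 ≤ x * h ^ (1-2*η) := by
      rcases le_or_gt (x*h) 1 with hu1 | hu1
      · have hE' : (1 - Real.exp (-(x*h)))^2 ≤ (x*h) ^ (1-2*η) := by
          calc (1 - Real.exp (-(x*h)))^2 ≤ (x*h)^2 := by nlinarith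
            _ = (x*h) ^ ((2:ℕ):ℝ) := (Real.rpow_natCast _ 2).symm
            _ ≤ (x*h) ^ (1-2*η) :=
                Real.rpow_le_rpow_of_exponent_ge hu hu1 (by push_cast; linarith)
        calc x ^ η * x ^ η * (1 - Real.exp (-(x*h)))^2
            ≤ x ^ η * x ^ η * ((x*h) ^ (1-2*η)) := by gcongr
          _ = x * h ^ (1-2*η) := by
              rw [Real.mul_rpow hx.le hh.le, ← mul_assoc, ← Real.rpow_add hx,
                ← Real.rpow_add hx, show η + η + (1-2*η) = 1 by ring,
                Real.rpow_one]
      · have hE1 : (1 - Real.exp (-(x*h)))^2 ≤ 1 := by nlinarith [Real.exp_pos (-(x*h))]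
        have hxh : 1/h ≤ x := by rw [div_le_iff₀ hh]; linarith
        have hpow : x ^ (η + η - 1) ≤ h ^ (1-2*η) := by
          calc x ^ (η+η-1) ≤ (1/h) ^ (η+η-1) :=
                Real.rpow_le_rpow_of_nonpos (by positivity) hxh (by linarith)
            _ = h ^ (1-2*η) := by
                rw [one_div, Real.inv_rpow hh.le, ← Real.rpow_neg hh.le]
                congr 1
                ring
        calc x ^ η * x ^ η * (1 - Real.exp (-(x*h)))^2
            ≤ x ^ η * x ^ η * 1 := by gcongr
          _ = x * x ^ (η+η-1) := by
              have hxx : x * x ^ (η+η-1) = x ^ (1 + (η+η-1)) := by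
                rw [Real.rpow_add hx, Real.rpow_one]
              rw [mul_one, ← Real.rpow_add hx, hxx]
              congr 1
              ring
          _ ≤ x * (h ^ (1-2*η)) := by gcongr
    have hstep1 : (1+x) ^ η * (1 - Real.exp (-(x*h)))^2 * min T (1/(2*x)) * (1+x) ^ η
        ≤ (2 * x ^ η) * (1 - Real.exp (-(x*h)))^2 * (1/(2*x)) * (2 * x ^ η) := by
      exact mul_le_mul (mul_le_mul (mul_le_mul hP2 le_rfl (by positivity) (by positivity))
        hMx hM0.le (by positivity)) hP2 hP.le (by positivity)
    have hstep2 : (2 * x ^ η) * (1 - Real.exp (-(x*h)))^2 * (1/(2*x)) * (2 * x ^ η)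
        = (x ^ η * x ^ η * (1 - Real.exp (-(x*h)))^2) * (2/x) := by
      rw [one_div, mul_inv]
      ring
    have hstep3 : (x ^ η * x ^ η * (1 - Real.exp (-(x*h)))^2) * (2/x)
        ≤ (x * h ^ (1-2*η)) * (2/x) := by gcongr
    have hstep4 : (x * h ^ (1-2*η)) * (2/x) = 2 * h ^ (1-2*η) := by
      linear_combination (2 * h ^ (1-2*η)) * mul_inv_cancel₀ (ne_of_gt hx)
    refine hstep1.trans ?_
    rw [hstep2]
    refine hstep3.trans ?_
    rw [hstep4]
    have hT1 : (1:ℝ) ≤ (T+1)^3 := by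
      calc (1:ℝ) = 1^3 := by norm_num
        _ ≤ (T+1)^3 := pow_le_pow_left₀ (by norm_num) (by linarith) 3
    linarith [mul_le_mul_of_nonneg_left hT1 hH.le]

lemma kia_main (ν : Measure ℝ) (c₀ η T h : ℝ) (K : ℝ → ℝ)
    (hη0 : 0 ≤ η) (hη : η < 1/2)
    (hint : Integrable (fun x => (1 + x) ^ (-η)) ν)
    (hsupp : ∀ᵐ x ∂ν, 0 < x)
    (hK : ∀ r : ℝ, 0 < r → K r = c₀ + ∫ x, Real.exp (-(x * r)) ∂ν)
    (hT : 0 < T) (hh : 0 < h) (hhT : h ≤ T) :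
    ∫⁻ r in Set.Ioc 0 T, ENNReal.ofReal ((K (h + r) - K r) ^ 2) ≤
      ENNReal.ofReal ((2*(T+1)^3 *
        ((∫⁻ x, ENNReal.ofReal ((1+x) ^ (-η)) ∂ν).toReal^2 + 1)) * h ^ (1 - 2*η)) := by
  have hη1 : η ≤ 1 := by linarith
  have hf₀meas : Measurable fun x : ℝ => (1+x) ^ (-η) :=
    (measurable_const.add measurable_id).pow measurable_const
  set A : ℝ≥0∞ := ∫⁻ x, ENNReal.ofReal ((1+x) ^ (-η)) ∂ν with hAdef
  have hA : A < ⊤ := hint.lintegral_lt_top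
  -- σ-finiteness of ν
  haveI hsf : SigmaFinite ν := by
    refine ⟨⟨⟨fun n => {x | ((n:ℝ≥0∞)+1)⁻¹ ≤ ENNReal.ofReal ((1+x) ^ (-η))} ∪ Iic 0,
      fun _ => trivial, fun n => ?_, ?_⟩⟩⟩
    · have h2 : ν (Iic 0) = 0 := by
        have h3 := hsupp
        rw [ae_iff] at h3
        refine measure_mono_null ?_ h3
        intro y hy
        simpa [not_lt] using hy
      have h1 : ν {x | ((n:ℝ≥0∞)+1)⁻¹ ≤ ENNReal.ofReal ((1+x) ^ (-η))}
          ≤ A / ((n:ℝ≥0∞)+1)⁻¹ :=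
        meas_ge_le_lintegral_div hf₀meas.ennreal_ofReal.aemeasurable
          (by simp) (by simp)
      calc ν ({x | ((n:ℝ≥0∞)+1)⁻¹ ≤ ENNReal.ofReal ((1+x) ^ (-η))} ∪ Iic 0)
          ≤ ν {x | ((n:ℝ≥0∞)+1)⁻¹ ≤ ENNReal.ofReal ((1+x) ^ (-η))} + ν (Iic 0) :=
            measure_union_le _ _
        _ = ν {x | ((n:ℝ≥0∞)+1)⁻¹ ≤ ENNReal.ofReal ((1+x) ^ (-η))} := by rw [h2, add_zero]
        _ ≤ A / ((n:ℝ≥0∞)+1)⁻¹ := h1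
        _ < ⊤ := ENNReal.div_lt_top hA.ne (by simp)
    · ext x
      simp only [mem_iUnion, mem_union, mem_setOf_eq, mem_Iic, mem_univ, iff_true]
      rcases le_or_gt x 0 with hx | hx
      · exact ⟨0, Or.inr hx⟩
      · have hpos : 0 < ENNReal.ofReal ((1+x) ^ (-η)) := by
          rw [ENNReal.ofReal_pos]
          exact Real.rpow_pos_of_pos (by linarith) _
        obtain ⟨n, hn⟩ := ENNReal.exists_inv_nat_lt hpos.ne'
        refine ⟨n, Or.inl (le_trans ?_ hn.le)⟩
        exact ENNReal.inv_le_inv.mpr le_self_add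
  -- integrability of the exponential kernels
  have hexpint : ∀ r : ℝ, 0 < r → Integrable (fun x => Real.exp (-(x*r))) ν := by
    intro r hr
    refine (hint.const_mul ((min r 1)⁻¹)).mono' ?_ ?_
    · exact ((measurable_id.mul_const r).neg.exp).aestronglyMeasurable
    · filter_upwards [hsupp] with x hx
      rw [Real.norm_eq_abs, abs_of_pos (Real.exp_pos _)]
      exact kia_exp_le hη0 hη1 hr hx.le
  -- the product function F
  set F : ℝ → ℝ → ℝ≥0∞ := fun r x =>
    ENNReal.ofReal ((1+x) ^ η * (Real.exp (-(x*r)) - Real.exp (-(x*(h+r))))^2) with hFdef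
  -- pointwise (in r) bound via Cauchy-Schwarz
  have hper : ∀ r ∈ Set.Ioc (0:ℝ) T,
      ENNReal.ofReal ((K (h+r) - K r)^2) ≤ A * ∫⁻ x, F r x ∂ν := by
    rintro r ⟨hr, hrT⟩
    have hhr : 0 < h + r := by linarith
    have hint_r := hexpint r hr
    have hint_hr := hexpint (h+r) hhr
    have hGint : Integrable (fun x => Real.exp (-(x*r)) - Real.exp (-(x*(h+r)))) ν :=
      hint_r.sub hint_hr
    have hGnn : 0 ≤ᵐ[ν] fun x => Real.exp (-(x*r)) - Real.exp (-(x*(h+r))) := by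
      filter_upwards [hsupp] with x hx
      have h1 : -(x*(h+r)) ≤ -(x*r) := by nlinarith
      have h2 := Real.exp_le_exp.mpr h1
      simp only [Pi.zero_apply]
      linarith
    have hDnn : 0 ≤ ∫ x, (Real.exp (-(x*r)) - Real.exp (-(x*(h+r)))) ∂ν :=
      integral_nonneg_of_ae hGnn
    have hsq : (K (h+r) - K r)^2
        = (∫ x, (Real.exp (-(x*r)) - Real.exp (-(x*(h+r)))) ∂ν)^2 := by
      have h1 : K (h+r) - K r
          = (∫ x, Real.exp (-(x*(h+r))) ∂ν) - ∫ x, Real.exp (-(x*r)) ∂ν := by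
        rw [hK _ hhr, hK _ hr]; ring
      have h2 : (∫ x, Real.exp (-(x*(h+r))) ∂ν) - ∫ x, Real.exp (-(x*r)) ∂ν
          = - ∫ x, (Real.exp (-(x*r)) - Real.exp (-(x*(h+r)))) ∂ν := by
        rw [integral_sub hint_r hint_hr]; ring
      rw [h1, h2, neg_sq]
    -- Cauchy–Schwarz with weights
    have hma : Measurable fun x => ENNReal.ofReal ((1+x) ^ (-(η/2))) :=
      ((measurable_const.add measurable_id).pow measurable_const).ennreal_ofReal
    have hGmeas : Measurable fun x : ℝ => Real.exp (-(x*r)) - Real.exp (-(x*(h+r))) :=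
      ((measurable_id.mul_const r).neg.exp).sub ((measurable_id.mul_const (h+r)).neg.exp)
    have hmb : Measurable fun x =>
        ENNReal.ofReal ((1+x) ^ (η/2) * (Real.exp (-(x*r)) - Real.exp (-(x*(h+r))))) :=
      (((measurable_const.add measurable_id).pow measurable_const).mul hGmeas).ennreal_ofReal
    have hCS := ENNReal.lintegral_mul_le_Lp_mul_Lq ν (p := 2) (q := 2)
      Real.HolderConjugate.two_two hma.aemeasurable hmb.aemeasurable
    have hsplit : ∀ᵐ x ∂ν, ENNReal.ofReal (Real.exp (-(x*r)) - Real.exp (-(x*(h+r))))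
        = ENNReal.ofReal ((1+x) ^ (-(η/2)))
          * ENNReal.ofReal ((1+x) ^ (η/2) * (Real.exp (-(x*r)) - Real.exp (-(x*(h+r))))) := by
      filter_upwards [hsupp] with x hx
      have h0x : (0:ℝ) < 1 + x := by linarith
      rw [← ENNReal.ofReal_mul (Real.rpow_nonneg h0x.le _), ← mul_assoc, ← Real.rpow_add h0x,
        show -(η/2) + η/2 = 0 by ring, Real.rpow_zero, one_mul]
    have hA2 : ∫⁻ x, ENNReal.ofReal ((1+x) ^ (-(η/2))) ^ (2:ℝ) ∂ν = A := by
      refine lintegral_congr_ae ?_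
      filter_upwards [hsupp] with x hx
      have h0x : (0:ℝ) < 1 + x := by linarith
      rw [ENNReal.ofReal_rpow_of_nonneg (Real.rpow_nonneg h0x.le _) (by norm_num),
        ← Real.rpow_mul h0x.le, show -(η/2) * 2 = -η by ring]
    have hB2 : ∫⁻ x, ENNReal.ofReal ((1+x) ^ (η/2)
        * (Real.exp (-(x*r)) - Real.exp (-(x*(h+r))))) ^ (2:ℝ) ∂ν = ∫⁻ x, F r x ∂ν := by
      refine lintegral_congr_ae ?_
      filter_upwards [hsupp, hGnn] with x hx hGx
      have h0x : (0:ℝ) < 1 + x := by linarith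
      rw [ENNReal.ofReal_rpow_of_nonneg (mul_nonneg (Real.rpow_nonneg h0x.le _) hGx)
        (by norm_num)]
      congr 1
      rw [Real.mul_rpow (Real.rpow_nonneg h0x.le _) hGx, ← Real.rpow_mul h0x.le,
        show η/2 * 2 = η by ring]
      congr 1
      rw [show (2:ℝ) = ((2:ℕ):ℝ) by norm_num, Real.rpow_natCast]
    rw [hsq, ENNReal.ofReal_pow hDnn, ofReal_integral_eq_lintegral_ofReal hGint hGnn]
    calc (∫⁻ x, ENNReal.ofReal (Real.exp (-(x*r)) - Real.exp (-(x*(h+r)))) ∂ν)^2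
        = (∫⁻ x, ENNReal.ofReal ((1+x) ^ (-(η/2)))
            * ENNReal.ofReal ((1+x) ^ (η/2)
              * (Real.exp (-(x*r)) - Real.exp (-(x*(h+r))))) ∂ν)^2 := by
          rw [lintegral_congr_ae hsplit]
      _ ≤ ((∫⁻ x, ENNReal.ofReal ((1+x) ^ (-(η/2))) ^ (2:ℝ) ∂ν) ^ (1/2:ℝ)
            * (∫⁻ x, ENNReal.ofReal ((1+x) ^ (η/2)
              * (Real.exp (-(x*r)) - Real.exp (-(x*(h+r))))) ^ (2:ℝ) ∂ν) ^ (1/2:ℝ))^2 := by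
          gcongr
          simpa using hCS
      _ = A * ∫⁻ x, F r x ∂ν := by
          rw [mul_pow, kia_sqrt_sq, kia_sqrt_sq, hA2, hB2]
  -- bound on the r-integral of F, for fixed x
  have hFbound : ∀ x : ℝ, 0 < x →
      (∫⁻ r in Set.Ioc (0:ℝ) T, F r x) ≤
        ENNReal.ofReal (2*(T+1)^3 * h ^ (1-2*η) * (1+x) ^ (-η)) := by
    intro x hx0
    have h0x : (0:ℝ) < 1+x := by linarith
    have hcx0 : 0 ≤ (1+x) ^ η * (1 - Real.exp (-(x*h)))^2 := by positivity
    have hsplit : ∀ r : ℝ, F r x = ENNReal.ofReal ((1+x) ^ η * (1 - Real.exp (-(x*h)))^2)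
        * ENNReal.ofReal (Real.exp (-(x*r))^2) := by
      intro r
      simp only [hFdef]
      rw [← ENNReal.ofReal_mul hcx0]
      congr 1
      have hexp : Real.exp (-(x*(h+r))) = Real.exp (-(x*r)) * Real.exp (-(x*h)) := by
        rw [← Real.exp_add]; congr 1; ring
      rw [hexp]; ring
    have hrint : (∫⁻ r in Set.Ioc (0:ℝ) T, ENNReal.ofReal (Real.exp (-(x*r))^2))
        ≤ ENNReal.ofReal (min T (1/(2*x))) := by
      have b1 : (∫⁻ r in Set.Ioc (0:ℝ) T, ENNReal.ofReal (Real.exp (-(x*r))^2))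
          ≤ ENNReal.ofReal T := by
        calc (∫⁻ r in Set.Ioc (0:ℝ) T, ENNReal.ofReal (Real.exp (-(x*r))^2))
            ≤ ∫⁻ _ in Set.Ioc (0:ℝ) T, 1 := by
              refine lintegral_mono_ae ?_
              filter_upwards [ae_restrict_mem measurableSet_Ioc] with r hr
              refine ENNReal.ofReal_le_one.mpr ?_
              have h1 : Real.exp (-(x*r)) ≤ 1 :=
                Real.exp_le_one_iff.mpr (by nlinarith [hr.1])
              nlinarith [Real.exp_pos (-(x*r))]
          _ = volume (Set.Ioc (0:ℝ) T) := setLIntegral_one _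
          _ = ENNReal.ofReal T := by rw [Real.volume_Ioc, sub_zero]
      have b2 : (∫⁻ r in Set.Ioc (0:ℝ) T, ENNReal.ofReal (Real.exp (-(x*r))^2))
          ≤ ENNReal.ofReal (1/(2*x)) := by
        have heq : ∀ r : ℝ, Real.exp (-(x*r))^2 = Real.exp (-(2*x)*r) := by
          intro r; rw [sq, ← Real.exp_add]; congr 1; ring
        calc (∫⁻ r in Set.Ioc (0:ℝ) T, ENNReal.ofReal (Real.exp (-(x*r))^2))
            ≤ ∫⁻ r in Set.Ioi (0:ℝ), ENNReal.ofReal (Real.exp (-(x*r))^2) :=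
              lintegral_mono_set Ioc_subset_Ioi_self
          _ = ∫⁻ r in Set.Ioi (0:ℝ), ENNReal.ofReal (Real.exp (-(2*x)*r)) := by
              simp_rw [heq]
          _ = ENNReal.ofReal (∫ r in Set.Ioi (0:ℝ), Real.exp (-(2*x)*r)) :=
              (ofReal_integral_eq_lintegral_ofReal
                (exp_neg_integrableOn_Ioi 0 (by positivity))
                (ae_of_all _ fun r => (Real.exp_pos _).le)).symm
          _ ≤ ENNReal.ofReal (1/(2*x)) := by
              apply ENNReal.ofReal_le_ofReal
              have hcomp := integral_comp_mul_left_Ioi (fun y => Real.exp (-y)) 0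
                (show (0:ℝ) < 2*x by positivity)
              simp only [mul_zero] at hcomp
              have : (∫ r in Set.Ioi (0:ℝ), Real.exp (-(2*x)*r))
                  = ∫ r in Set.Ioi (0:ℝ), Real.exp (-(2*x*r)) := by
                congr 1; funext r; congr 1; ring
              rw [this, hcomp, smul_eq_mul, integral_exp_neg_Ioi_zero, mul_one, one_div]
      have hminmap : ENNReal.ofReal (min T (1/(2*x)))
          = min (ENNReal.ofReal T) (ENNReal.ofReal (1/(2*x))) :=
        Monotone.map_min fun _ _ hab => ENNReal.ofReal_le_ofReal hab
      rw [hminmap]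
      exact le_min b1 b2
    calc (∫⁻ r in Set.Ioc (0:ℝ) T, F r x)
        = ENNReal.ofReal ((1+x) ^ η * (1 - Real.exp (-(x*h)))^2)
            * ∫⁻ r in Set.Ioc (0:ℝ) T, ENNReal.ofReal (Real.exp (-(x*r))^2) := by
          simp_rw [hsplit]
          exact lintegral_const_mul' _ _ ENNReal.ofReal_ne_top
      _ ≤ ENNReal.ofReal ((1+x) ^ η * (1 - Real.exp (-(x*h)))^2)
            * ENNReal.ofReal (min T (1/(2*x))) := mul_le_mul_right hrint _
      _ = ENNReal.ofReal ((1+x) ^ η * (1 - Real.exp (-(x*h)))^2 * min T (1/(2*x))) :=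
          (ENNReal.ofReal_mul hcx0).symm
      _ ≤ ENNReal.ofReal (2*(T+1)^3 * h ^ (1-2*η) * (1+x) ^ (-η)) :=
          ENNReal.ofReal_le_ofReal (kia_key hη0 hη hT hh hhT hx0)
  -- measurability for Tonelli
  have hFmeas : Measurable (Function.uncurry F) := by
    apply Measurable.ennreal_ofReal
    exact ((measurable_const.add measurable_snd).pow measurable_const).mul
      (((Real.measurable_exp.comp (measurable_snd.mul measurable_fst).neg).sub
        (Real.measurable_exp.comp
          (measurable_snd.mul (measurable_const.add measurable_fst)).neg)).pow_const 2)
  have hc0 : (0:ℝ) ≤ 2*(T+1)^3 * h ^ (1-2*η) := by positivity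
  -- put everything together
  calc ∫⁻ r in Set.Ioc 0 T, ENNReal.ofReal ((K (h + r) - K r) ^ 2)
      ≤ ∫⁻ r in Set.Ioc 0 T, A * ∫⁻ x, F r x ∂ν := by
        refine lintegral_mono_ae ?_
        filter_upwards [ae_restrict_mem measurableSet_Ioc] with r hr
        exact hper r hr
    _ = A * ∫⁻ r in Set.Ioc 0 T, ∫⁻ x, F r x ∂ν := lintegral_const_mul' _ _ hA.ne
    _ = A * ∫⁻ x, (∫⁻ r in Set.Ioc (0:ℝ) T, F r x) ∂ν := by
        rw [lintegral_lintegral_swap hFmeas.aemeasurable]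
    _ ≤ A * ∫⁻ x, ENNReal.ofReal (2*(T+1)^3 * h ^ (1-2*η) * (1+x) ^ (-η)) ∂ν := by
        refine mul_le_mul_right (lintegral_mono_ae ?_) _
        filter_upwards [hsupp] with x hx
        exact hFbound x hx
    _ = A * (ENNReal.ofReal (2*(T+1)^3 * h ^ (1-2*η)) * A) := by
        congr 1
        simp_rw [ENNReal.ofReal_mul hc0]
        exact lintegral_const_mul' _ _ ENNReal.ofReal_ne_top
    _ ≤ ENNReal.ofReal ((2*(T+1)^3 * (A.toReal^2 + 1)) * h ^ (1 - 2*η)) := by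
        conv_lhs => rw [← ENNReal.ofReal_toReal hA.ne]
        rw [← ENNReal.ofReal_mul hc0, ← ENNReal.ofReal_mul ENNReal.toReal_nonneg]
        apply ENNReal.ofReal_le_ofReal
        have h1 : (0:ℝ) ≤ A.toReal := ENNReal.toReal_nonneg
        have h2 : (0:ℝ) < h ^ (1-2*η) := Real.rpow_pos_of_pos hh _
        nlinarith [mul_pos (show (0:ℝ) < 2*(T+1)^3 by positivity) h2]


/-- Let `μ` be a Borel measure on `(0,∞)`, `c₀ ≥ 0`, `K(r) = c₀ + ∫ e^{-xr} dμ`, and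
suppose `η ∈ [0,1/2)` satisfies `∫ (1+x)^{-η} dμ < ∞`. Then for every `T > 0` there is
`C > 0` with `∫_0^T (K(h+r) − K(r))² dr ≤ C h^{1−2η}` for every `h ∈ (0,T]`. -/
theorem kernel_increment_bound (μ : Measure ℝ) (c₀ : ℝ) (hc₀ : 0 ≤ c₀)
    (η : ℝ) (hη0 : 0 ≤ η) (hη : η < 1 / 2)
    (hint : IntegrableOn (fun x => (1 + x) ^ (-η)) (Set.Ioi 0) μ)
    (K : ℝ → ℝ) (hK : ∀ r : ℝ, 0 < r → K r = c₀ + ∫ x in Set.Ioi 0, Real.exp (-(x * r)) ∂μ)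
    (T : ℝ) (hT : 0 < T) :
    ∃ C : ℝ, 0 < C ∧ ∀ h ∈ Set.Ioc (0 : ℝ) T,
      ∫⁻ r in Set.Ioc 0 T, ENNReal.ofReal ((K (h + r) - K r) ^ 2) ≤
        ENNReal.ofReal (C * h ^ (1 - 2 * η)) := by
  refine ⟨2*(T+1)^3 *
    ((∫⁻ x, ENNReal.ofReal ((1+x) ^ (-η)) ∂(μ.restrict (Set.Ioi 0))).toReal^2 + 1),
    by positivity, ?_⟩
  rintro h ⟨hh, hhT⟩
  exact kia_main (μ.restrict (Set.Ioi 0)) c₀ η T h K hη0 (by linarith) hint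
    ((ae_restrict_mem measurableSet_Ioi).mono fun x hx => hx) hK hT hh hhT
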